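/- Let (X,d) be a forward sequentially compact quasi cone metric space. Then every backward convergent sequence in X is also forward convergent to the same limit. -/

import Mathlib

open TopologicalSpace

/-- A quasi cone metric space on `X` with values in a real Banach space `E`,
ordered by a cone `P` with nonempty interior. -/
structure QCMS (X : Type*) (E : Type*) [NormedAddCommGroup E] [NormedSpace ℝ E] : Type _ where
  P : Set E
  P_closed : IsClosed P
  P_ne : P ≠ {0}
  P_nonempty : P.Nonempty
  P_smul_add : ∀ ⦃x⦄, x ∈ P → ∀ ⦃y⦄, y ∈ P → ∀ s t : ℝ, 0 ≤ s → 0 ≤ t → s • x + t • y ∈ P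
  P_eq_zero : ∀ x, x ∈ P → -x ∈ P → x = 0
  P_int : (interior P).Nonempty
  d : X → X → E
  d_mem : ∀ x y, d x y ∈ P
  d_eq_zero_iff : ∀ x y, d x y = 0 ↔ x = y
  triangle : ∀ x y z, d x z + d z y - d x y ∈ P

namespace QCMS

variable {X E : Type*} [NormedAddCommGroup E] [NormedSpace ℝ E]

/-- `a ≪ b` : `b - a` lies in the interior of the cone. -/
def lt' (Q : QCMS X E) (a b : E) : Prop := b - a ∈ interior Q.P

/-- Forward open ball. -/
def ballF (Q : QCMS X E) (x : X) (u : E) : Set X := {y | Q.lt' (Q.d x y) u}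

/-- Backward open ball. -/
def ballB (Q : QCMS X E) (x : X) (u : E) : Set X := {y | Q.lt' (Q.d y x) u}

/-- The forward topology, generated by forward open balls. -/
def Tf (Q : QCMS X E) : TopologicalSpace X :=
  generateFrom {s | ∃ x u, u ∈ interior Q.P ∧ s = Q.ballF x u}

/-- The backward topology, generated by backward open balls. -/
def Tb (Q : QCMS X E) : TopologicalSpace X :=
  generateFrom {s | ∃ x u, u ∈ interior Q.P ∧ s = Q.ballB x u}

/-- Forward convergence of a sequence. -/
def FConv (Q : QCMS X E) (x : ℕ → X) (a : X) : Prop :=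
  ∀ u ∈ interior Q.P, ∃ N, ∀ n ≥ N, Q.lt' (Q.d a (x n)) u

/-- Backward convergence of a sequence. -/
def BConv (Q : QCMS X E) (x : ℕ → X) (a : X) : Prop :=
  ∀ u ∈ interior Q.P, ∃ N, ∀ n ≥ N, Q.lt' (Q.d (x n) a) u

/-- Forward Cauchy sequence. -/
def FCauchy (Q : QCMS X E) (x : ℕ → X) : Prop :=
  ∀ u ∈ interior Q.P, ∃ N, ∀ m n, N ≤ m → m ≤ n → Q.lt' (Q.d (x m) (x n)) u

/-- Forward sequential compactness of the whole space. -/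
def FSeqCompact (Q : QCMS X E) : Prop :=
  ∀ x : ℕ → X, ∃ (a : X) (φ : ℕ → ℕ), StrictMono φ ∧ Q.FConv (x ∘ φ) a

/-- Forward total boundedness of the whole space. -/
def FTotallyBounded (Q : QCMS X E) : Prop :=
  ∀ u ∈ interior Q.P, ∃ t : Finset X, ∀ y : X, ∃ c ∈ t, y ∈ Q.ballF c u

/-- Forward completeness. -/
def FComplete (Q : QCMS X E) : Prop :=
  ∀ x : ℕ → X, Q.FCauchy x → ∃ a, Q.FConv x a

lemma P_add' (Q : QCMS X E) {p q : E} (hp : p ∈ Q.P) (hq : q ∈ Q.P) : p + q ∈ Q.P := by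
  have := Q.P_smul_add hp hq 1 1 zero_le_one zero_le_one
  simpa using this

lemma add_mem_interior' (Q : QCMS X E) {p q : E} (hp : p ∈ Q.P) (hq : q ∈ interior Q.P) :
    p + q ∈ interior Q.P := by
  have hopen : IsOpen ((p + ·) '' interior Q.P) :=
    (isOpenMap_add_left p) _ isOpen_interior
  have hsub : ((p + ·) '' interior Q.P) ⊆ Q.P := by
    rintro _ ⟨y, hy, rfl⟩
    exact Q.P_add' hp (interior_subset hy)
  exact interior_maximal hsub hopen ⟨q, hq, rfl⟩

lemma smul_mem_interior' (Q : QCMS X E) {u : E} (hu : u ∈ interior Q.P) {c : ℝ} (hc : 0 < c) :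
    c • u ∈ interior Q.P := by
  have hopen : IsOpen ((c • ·) '' interior Q.P) :=
    (isOpenMap_smul₀ (ne_of_gt hc)) _ isOpen_interior
  have hsub : ((c • ·) '' interior Q.P) ⊆ Q.P := by
    rintro _ ⟨y, hy, rfl⟩
    have := Q.P_smul_add (interior_subset hy) (interior_subset hy) c 0 hc.le le_rfl
    simpa using this
  exact interior_maximal hsub hopen ⟨u, hu, rfl⟩

end QCMS

/-- in a forward sequentially compact space, backward convergence implies
forward convergence. -/
theorem forward_of_backward_conv {X E : Type*} [NormedAddCommGroup E] [NormedSpace ℝ E]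
    (Q : QCMS X E) (hsc : Q.FSeqCompact) :
    ∀ (x : ℕ → X) (a : X), Q.BConv x a → Q.FConv x a := by
  intro x a hB
  by_contra h
  simp only [QCMS.FConv] at h
  push_neg at h
  obtain ⟨u, hu, hbad⟩ := h
  choose f hf1 hf2 using hbad
  -- build strictly increasing φ with ¬ lt' (d a (x (φ k))) u
  set φ : ℕ → ℕ := fun k => Nat.rec (f 0) (fun _ p => f (p + 1)) k with hφ
  have hφ0 : φ 0 = f 0 := rfl
  have hφs : ∀ k, φ (k + 1) = f (φ k + 1) := fun k => rfl
  have hφmono : StrictMono φ := by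
    apply strictMono_nat_of_lt_succ
    intro k
    rw [hφs]
    exact lt_of_lt_of_le (Nat.lt_succ_self _) (hf1 (φ k + 1))
  have hφbad : ∀ k, ¬ Q.lt' (Q.d a (x (φ k))) u := by
    intro k
    cases k with
    | zero => rw [hφ0]; exact hf2 0
    | succ m => rw [hφs]; exact hf2 (φ m + 1)
  obtain ⟨b, ψ, hψ, hF⟩ := hsc (x ∘ φ)
  -- show b = a
  set c : E := Q.d b a with hc
  have key : ∀ n : ℕ, ((1 : ℝ) / (n + 1)) • u - c ∈ Q.P := by
    intro n
    have hpos : (0 : ℝ) < 1 / (2 * (n + 1)) := by positivity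
    set v : E := ((1 : ℝ) / (2 * (n + 1))) • u with hv
    have hvmem : v ∈ interior Q.P := Q.smul_mem_interior' hu hpos
    obtain ⟨N₁, hN₁⟩ := hF v hvmem
    obtain ⟨N₂, hN₂⟩ := hB v hvmem
    set m : ℕ := max N₁ N₂ with hm
    set y : X := x (φ (ψ m)) with hy
    have h1 : v - Q.d b y ∈ interior Q.P := hN₁ m (le_max_left _ _)
    have h2 : v - Q.d y a ∈ interior Q.P := by
      have hge : φ (ψ m) ≥ N₂ :=
        le_trans (le_max_right N₁ N₂) (le_trans hψ.le_apply hφmono.le_apply)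
      exact hN₂ (φ (ψ m)) hge
    have htri : Q.d b y + Q.d y a - c ∈ Q.P := Q.triangle b a y
    have hsum : (v + v) - (Q.d b y + Q.d y a) ∈ interior Q.P := by
      have := Q.add_mem_interior' (interior_subset h1) h2
      have heq : (v - Q.d b y) + (v - Q.d y a) = (v + v) - (Q.d b y + Q.d y a) := by abel
      rwa [heq] at this
    have hvv : v + v = ((1 : ℝ) / (n + 1)) • u := by
      have hn : ((n : ℝ) + 1) ≠ 0 := by positivity
      have hs : (1 : ℝ) / (2 * ((n : ℝ) + 1)) + 1 / (2 * ((n : ℝ) + 1))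
          = 1 / ((n : ℝ) + 1) := by
        rw [← add_div]
        rw [div_eq_div_iff (by positivity) hn]
        ring
      rw [hv, ← add_smul, hs]
    have : ((v + v) - (Q.d b y + Q.d y a)) + (Q.d b y + Q.d y a - c) ∈ Q.P :=
      Q.P_add' (interior_subset hsum) htri
    have heq2 : ((v + v) - (Q.d b y + Q.d y a)) + (Q.d b y + Q.d y a - c)
        = (v + v) - c := by abel
    rw [heq2, hvv] at this
    exact this
  have hneg : -c ∈ Q.P := by
    have htend : Filter.Tendsto (fun n : ℕ => ((1 : ℝ) / (n + 1)) • u - c)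
        Filter.atTop (nhds (-c)) := by
      have h0 : Filter.Tendsto (fun n : ℕ => ((1 : ℝ) / (n + 1)) • u)
          Filter.atTop (nhds 0) := by
        have := (tendsto_one_div_add_atTop_nhds_zero_nat (𝕜 := ℝ)).smul_const u
        simpa using this
      have := h0.sub (tendsto_const_nhds (x := c))
      simpa using this
    exact Q.P_closed.mem_of_tendsto htend (Filter.Eventually.of_forall key)
  have hc0 : c = 0 := Q.P_eq_zero c (Q.d_mem b a) hneg
  have hba : b = a := (Q.d_eq_zero_iff b a).mp hc0
  -- contradiction with hφbad
  obtain ⟨N, hN⟩ := hF u hu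
  have := hN N le_rfl
  rw [hba] at this
  exact hφbad (ψ N) this
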